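/- arXiv:math/0407016 — 2 statements merged into one kernel-verified Lean document; each statement's English description precedes it below -/
import Mathlib

section
/- Let n ≥ 1 and m ≥ 1 be integers. For a uniformly random binary word of length n, the probability that the longest run has length at most m is at least (1 − 2^{−m})^n. -/
open scoped Classical

/-- The length of the longest run of a word: the largest `m` such that a block of
`m` consecutive equal letters occurs in the word. -/
noncomputable def maxRun {α : Type*} (l : List α) : ℕ :=
  sSup {m | ∃ c, List.replicate m c <:+: l}

lemma maxRun_le_iff {α : Type*} {l : List α} {m : ℕ} :
    maxRun l ≤ m ↔ ∀ k c, List.replicate k c <:+: l → k ≤ m := by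
  have hbdd : BddAbove {m | ∃ c, List.replicate m c <:+: l} :=
    ⟨l.length, fun x ⟨c, hc⟩ => by simpa using hc.length_le⟩
  constructor
  · intro h k c hk
    exact le_trans (le_csSup hbdd ⟨c, hk⟩) h
  · intro h
    exact csSup_le' (fun x ⟨c, hc⟩ => h x c hc)

lemma maxRun_le_length {α : Type*} (l : List α) : maxRun l ≤ l.length :=
  maxRun_le_iff.mpr (fun k c hk => by simpa using hk.length_le)

lemma infix_append_cases {α : Type*} {L u v : List α} (h : L <:+: u ++ v) :
    L <:+: u ∨ L <:+: v ∨
      ∃ s t, L = s ++ t ∧ s ≠ [] ∧ t ≠ [] ∧ s <:+ u ∧ t <+: v := by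
  obtain ⟨p, q, hpq⟩ := h
  have hL : L = (List.take L.length (List.drop p.length (u ++ v))) := by
    rw [← hpq]
    simp [List.drop_left, List.take_left]
  have infix_td : ∀ (a b : ℕ) (w : List α), List.take a (List.drop b w) <:+: w :=
    fun a b w => (List.take_prefix _ _).isInfix.trans (List.drop_suffix b w).isInfix
  by_cases h1 : p.length + L.length ≤ u.length
  · left
    have : L = List.take L.length (List.drop p.length u) := by
      conv_lhs => rw [hL]
      rw [List.drop_append, List.take_append]
      have : (List.drop p.length u).length = u.length - p.length := by simp
      rw [show L.length - (List.drop p.length u).length = 0 by omega]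
      simp
    rw [this]; exact infix_td _ _ _
  · by_cases h2 : u.length ≤ p.length
    · right; left
      have : L = List.take L.length (List.drop (p.length - u.length) v) := by
        conv_lhs => rw [hL]
        rw [List.drop_append, List.drop_eq_nil_of_le h2]
        simp
      rw [this]; exact infix_td _ _ _
    · right; right
      push_neg at h1 h2
      refine ⟨L.take (u.length - p.length), L.drop (u.length - p.length),
        (List.take_append_drop _ _).symm, ?_, ?_, ?_, ?_⟩
      · have hlen : (L.take (u.length - p.length)).length = u.length - p.length := by
          rw [List.length_take]; omega
        intro hnil; rw [hnil] at hlen; simp at hlen; omega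
      · have hlen : (L.drop (u.length - p.length)).length = L.length - (u.length - p.length) := by
          simp
        intro hnil; rw [hnil] at hlen; simp at hlen; omega
      · have : L.take (u.length - p.length) = u.drop p.length := by
          conv_lhs => rw [hL]
          rw [List.take_take, List.take_drop]
          rw [show min (u.length - p.length) L.length = u.length - p.length by omega]
          rw [show p.length + (u.length - p.length) = u.length by omega, List.take_left]
        rw [this]; exact List.drop_suffix _ _
      · have : L.drop (u.length - p.length) = v.take (L.length - (u.length - p.length)) := by
          conv_lhs => rw [hL]
          rw [List.drop_take, List.drop_drop]
          rw [show p.length + (u.length - p.length) = u.length by omega, List.drop_left]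
        rw [this]; exact List.take_prefix _ _

lemma maxRun_append_replicate {α : Type*} {u : List α} {k m : ℕ} {c : α}
    (hu : maxRun u ≤ m) (hk : k ≤ m) (hne : u ≠ [])
    (hlast : u.getLast hne ≠ c) :
    maxRun (u ++ List.replicate k c) ≤ m := by
  rw [maxRun_le_iff]
  intro j d hj
  rcases infix_append_cases hj with h | h | ⟨s, t, hst, hs0, ht0, hsu, htv⟩
  · exact maxRun_le_iff.mp hu j d h
  · have := h.length_le
    simp at this
    omega
  · exfalso
    have hmem : ∀ x, x ∈ s ++ t → x = d := by
      intro x hx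
      rw [← hst] at hx
      exact (List.eq_of_mem_replicate hx)
    have htc : t.head ht0 = c := by
      have : t.head ht0 ∈ List.replicate k c := htv.mem (List.head_mem ht0)
      exact List.eq_of_mem_replicate this
    have htd : t.head ht0 = d := hmem _ (List.mem_append_right s (List.head_mem ht0))
    have hsd : s.getLast hs0 = d := hmem _ (List.mem_append_left t (List.getLast_mem hs0))
    have hsl : s.getLast hs0 = u.getLast hne := by
      obtain ⟨r, hr⟩ := hsu
      subst hr
      exact (List.getLast_append_of_right_ne_nil _ _ hs0).symm
    rw [hsl] at hsd
    rw [htc] at htd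
    exact hlast (hsd.trans htd.symm)

def extWord (n k : ℕ) (w : Fin (n - k) → Fin 2) : Fin n → Fin 2 :=
  fun i => if h : (i : ℕ) < n - k then w ⟨i, h⟩
    else if h2 : n - k - 1 < n - k then 1 - w ⟨n - k - 1, h2⟩ else 0

lemma ofFn_extWord {n k : ℕ} (hk : k ≤ n) (h1 : 1 ≤ n - k) (w : Fin (n - k) → Fin 2) :
    List.ofFn (extWord n k w) =
      List.ofFn w ++ List.replicate k (1 - w ⟨n - k - 1, by omega⟩) := by
  apply List.ext_getElem
  · simp; omega
  · intro i h1' h2'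
    simp only [List.getElem_ofFn, List.getElem_append, List.length_ofFn,
      List.getElem_replicate, extWord]
    by_cases h : i < n - k
    · simp [h]
    · rw [dif_neg h, dif_neg (by omega : ¬ i < n - k), dif_pos (by omega : n - k - 1 < n - k)]

lemma fin2_sub_ne (x : Fin 2) : 1 - x ≠ x := by revert x; decide

noncomputable def runCount (m n : ℕ) : ℕ :=
  (Finset.univ.filter fun w : Fin n → Fin 2 => maxRun (List.ofFn w) ≤ m).card

lemma extWord_getLast {n k : ℕ} (h1 : 1 ≤ n - k) (w : Fin (n - k) → Fin 2) :
    (List.ofFn w).getLast (by simp [← List.length_pos_iff]; omega)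
      = w ⟨n - k - 1, by omega⟩ := by
  rw [List.getLast_eq_getElem, List.getElem_ofFn]
  congr 1
  simp

-- properties of extWord values
lemma extWord_lt {n k : ℕ} (w : Fin (n - k) → Fin 2) (i : Fin n) (h : (i : ℕ) < n - k) :
    extWord n k w i = w ⟨i, h⟩ := by simp [extWord, h]

lemma extWord_ge {n k : ℕ} (h1 : 1 ≤ n - k) (w : Fin (n - k) → Fin 2) (i : Fin n)
    (h : n - k ≤ (i : ℕ)) :
    extWord n k w i = 1 - w ⟨n - k - 1, by omega⟩ := by
  simp only [extWord, dif_neg (by omega : ¬ (i : ℕ) < n - k),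
    dif_pos (by omega : n - k - 1 < n - k)]

noncomputable def extSet (m n k : ℕ) : Finset (Fin n → Fin 2) :=
  (Finset.univ.filter fun w : Fin (n - k) → Fin 2 => maxRun (List.ofFn w) ≤ m).image
    (extWord n k)

lemma extSet_subset {m n k : ℕ} (hk : 1 ≤ k) (hkm : k ≤ m) (hmn : m < n) :
    extSet m n k ⊆ Finset.univ.filter fun w : Fin n → Fin 2 => maxRun (List.ofFn w) ≤ m := by
  intro v hv
  simp only [extSet, Finset.mem_image, Finset.mem_filter, Finset.mem_univ, true_and] at hv
  obtain ⟨w, hw, rfl⟩ := hv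
  have hkn : k ≤ n := by omega
  have h1 : 1 ≤ n - k := by omega
  simp only [Finset.mem_filter, Finset.mem_univ, true_and]
  rw [ofFn_extWord hkn h1]
  refine maxRun_append_replicate hw hkm (by simp [← List.length_pos_iff]; omega) ?_
  rw [extWord_getLast h1]
  exact (fin2_sub_ne _).symm

lemma extSet_card {m n k : ℕ} (hk : 1 ≤ k) (hkm : k ≤ m) (hmn : m < n) :
    (extSet m n k).card = runCount m (n - k) := by
  rw [extSet, Finset.card_image_of_injOn, runCount]
  intro w _ w' _ hww
  funext i
  have hlt : (i : ℕ) < n := by omega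
  have := congrFun hww ⟨(i : ℕ), hlt⟩
  rw [extWord_lt w ⟨(i : ℕ), hlt⟩ i.2, extWord_lt w' ⟨(i : ℕ), hlt⟩ i.2] at this
  exact this

lemma extSet_disj {m n : ℕ} (hmn : m < n) : ∀ k ∈ Finset.Icc 1 m, ∀ k' ∈ Finset.Icc 1 m,
    k ≠ k' → Disjoint (extSet m n k) (extSet m n k') := by
  have key : ∀ k k', k ∈ Finset.Icc 1 m → k' ∈ Finset.Icc 1 m → k < k' →
      ∀ v, v ∈ extSet m n k → v ∈ extSet m n k' → False := by
    intro k k' hk hk' hlt v hv hv'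
    simp only [Finset.mem_Icc] at hk hk'
    simp only [extSet, Finset.mem_image, Finset.mem_filter, Finset.mem_univ, true_and] at hv hv'
    obtain ⟨w, hw, rfl⟩ := hv
    obtain ⟨w', hw', he⟩ := hv'
    have h1 : 1 ≤ n - k := by omega
    have h1' : 1 ≤ n - k' := by omega
    have L1 := extWord_ge h1' w' ⟨n - k - 1, by omega⟩ (show n - k' ≤ n - k - 1 by omega)
    have R1 := extWord_lt w ⟨n - k - 1, by omega⟩ (show n - k - 1 < n - k by omega)
    have L2 := extWord_ge h1' w' ⟨n - k, by omega⟩ (show n - k' ≤ n - k by omega)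
    have R2 := extWord_ge h1 w ⟨n - k, by omega⟩ (show n - k ≤ n - k by omega)
    have E1 : w ⟨n - k - 1, by omega⟩ = 1 - w' ⟨n - k' - 1, by omega⟩ :=
      R1.symm.trans ((congrFun he ⟨n - k - 1, by omega⟩).symm.trans L1)
    have E2 : (1 : Fin 2) - w' ⟨n - k' - 1, by omega⟩ = 1 - w ⟨n - k - 1, by omega⟩ :=
      L2.symm.trans ((congrFun he ⟨n - k, by omega⟩).trans R2)
    exact fin2_sub_ne (w ⟨n - k - 1, by omega⟩) (by exact (E1.trans E2).symm)
  intro k hk k' hk' hne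
  rw [Finset.disjoint_left]
  intro v hv hv'
  rcases lt_or_gt_of_ne hne with h | h
  · exact key k k' hk hk' h v hv hv'
  · exact key k' k hk' hk h v hv' hv

lemma runCount_recur {m n : ℕ} (hm : 1 ≤ m) (hmn : m < n) :
    ∑ k ∈ Finset.Icc 1 m, runCount m (n - k) ≤ runCount m n := by
  calc ∑ k ∈ Finset.Icc 1 m, runCount m (n - k)
      = ∑ k ∈ Finset.Icc 1 m, (extSet m n k).card := by
        refine Finset.sum_congr rfl fun k hk => ?_
        simp only [Finset.mem_Icc] at hk
        exact (extSet_card hk.1 hk.2 hmn).symm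
    _ = ((Finset.Icc 1 m).biUnion (extSet m n)).card :=
        (Finset.card_biUnion (extSet_disj hmn)).symm
    _ ≤ runCount m n := by
        apply Finset.card_le_card
        apply Finset.biUnion_subset.mpr
        intro k hk
        simp only [Finset.mem_Icc] at hk
        exact extSet_subset hk.1 hk.2 hmn

lemma runCount_full {m n : ℕ} (h : n ≤ m) : runCount m n = 2 ^ n := by
  rw [runCount]
  have : (Finset.univ.filter fun w : Fin n → Fin 2 => maxRun (List.ofFn w) ≤ m)
      = Finset.univ := by
    apply Finset.filter_true_of_mem
    intro w _
    exact le_trans (maxRun_le_length _) (by simp [h])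
  rw [this, Finset.card_univ]
  simp [Fintype.card_fun]

lemma key_bound (m : ℕ) (hm : 1 ≤ m) :
    ∀ n, (1 - (2 : ℝ) ^ (-(m : ℤ))) ^ n * 2 ^ n ≤ (runCount m n : ℝ) := by
  have h2m : (0 : ℝ) < 2 ^ (-(m : ℤ)) := by positivity
  have h2m1 : (2 : ℝ) ^ (-(m : ℤ)) ≤ 1 := by
    rw [zpow_neg, zpow_natCast]
    exact inv_le_one_of_one_le₀ (one_le_pow₀ (by norm_num))
  set q : ℝ := 1 - (2 : ℝ) ^ (-(m : ℤ)) with hq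
  have hq0 : 0 ≤ q := by rw [hq]; linarith
  have hq1 : q ≤ 1 := by rw [hq]; linarith
  intro n
  induction n using Nat.strong_induction_on with
  | _ n ih =>
    by_cases hn : n ≤ m
    · rw [runCount_full hn]
      have : q ^ n ≤ 1 := pow_le_one₀ hq0 hq1
      push_cast
      nlinarith [pow_pos (show (0:ℝ) < 2 by norm_num) n]
    · push_neg at hn
      have hrec := runCount_recur hm hn
      have hrecR : (∑ k ∈ Finset.Icc 1 m, (runCount m (n - k) : ℝ)) ≤ (runCount m n : ℝ) := by
        exact_mod_cast hrec
      have step1 : ∑ k ∈ Finset.Icc 1 m, q ^ (n - 1) * 2 ^ (n - k)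
          ≤ ∑ k ∈ Finset.Icc 1 m, (runCount m (n - k) : ℝ) := by
        apply Finset.sum_le_sum
        intro k hk
        simp only [Finset.mem_Icc] at hk
        have hlt : n - k < n := by omega
        refine le_trans ?_ (ih (n - k) hlt)
        have : q ^ (n - 1) ≤ q ^ (n - k) :=
          pow_le_pow_of_le_one hq0 hq1 (by omega)
        nlinarith [pow_pos (show (0:ℝ) < 2 by norm_num) (n - k),
          pow_nonneg hq0 (n - k)]
      have sum2 : ∑ k ∈ Finset.Icc 1 m, (2 : ℝ) ^ (n - k)
          = 2 ^ n - 2 ^ (n - m) := by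
        have hgs := geom_sum_Ico (K := ℝ) (x := 2) (by norm_num)
          (show n - m ≤ n by omega)
        rw [Finset.sum_nbij' (i := fun k => n - k) (j := fun x => n - x)
          (t := Finset.Ico (n - m) n) (g := fun j => (2:ℝ) ^ j)]
        · rw [hgs]; ring
        · intro a ha; simp only [Finset.mem_Icc] at ha; simp only [Finset.mem_Ico]; omega
        · intro a ha; simp only [Finset.mem_Ico] at ha; simp only [Finset.mem_Icc]; omega
        · intro a ha; simp only [Finset.mem_Icc] at ha; omega
        · intro a ha; simp only [Finset.mem_Ico] at ha; omega
        · intro a ha; rfl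
      have sum3 : ∑ k ∈ Finset.Icc 1 m, q ^ (n - 1) * 2 ^ (n - k)
          = q ^ (n - 1) * (2 ^ n - 2 ^ (n - m)) := by
        rw [← Finset.mul_sum, sum2]
      have hqpow : q ^ n * 2 ^ n ≤ q ^ (n - 1) * (2 ^ n - 2 ^ (n - m)) := by
        have hn1 : n - 1 + 1 = n := by omega
        have h2nm : (2 : ℝ) ^ (n - m) = 2 ^ n * 2 ^ (-(m : ℤ)) := by
          rw [← zpow_natCast (2 : ℝ) (n - m), ← zpow_natCast (2 : ℝ) n, ← zpow_add₀ (by norm_num)]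
          congr 1
          omega
        have : q ^ n = q ^ (n - 1) * q := by rw [← pow_succ, hn1]
        rw [this, h2nm, hq]
        have hqn1 : (0:ℝ) ≤ q ^ (n - 1) := pow_nonneg hq0 _
        nlinarith [pow_pos (show (0:ℝ) < 2 by norm_num) n]
      calc q ^ n * 2 ^ n ≤ q ^ (n - 1) * (2 ^ n - 2 ^ (n - m)) := hqpow
        _ = ∑ k ∈ Finset.Icc 1 m, q ^ (n - 1) * 2 ^ (n - k) := sum3.symm
        _ ≤ ∑ k ∈ Finset.Icc 1 m, (runCount m (n - k) : ℝ) := step1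
        _ ≤ (runCount m n : ℝ) := hrecR

theorem stmt_13 (n m : ℕ) (hn : 1 ≤ n) (hm : 1 ≤ m) :
    (1 - (2 : ℝ) ^ (-(m : ℤ))) ^ n
      ≤ ((Finset.univ.filter fun w : Fin n → Fin 2 =>
            maxRun (List.ofFn w) ≤ m).card : ℝ) / 2 ^ n := by
  rw [le_div_iff₀ (by positivity)]
  exact key_bound m hm n
end

section
/- Let w be a primitive word of length n over the alphabet {a, b}, and let ρ(w) be the unique Lyndon word in its cyclic-shift orbit. Then the length of the longest run of the letter a satisfies M_n^a(w) ≤ M_n^a(ρ(w)). -/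
open scoped Classical

/-- A Lyndon word: strictly smaller, in lexicographic order, than each of its
proper (nonempty) suffixes. -/
def IsLyndon {α : Type*} [LinearOrder α] (w : List α) : Prop :=
  ∀ i, 0 < i → i < w.length → List.Lex (· < ·) w (w.drop i)

/-- A word is primitive if the only cyclic shift fixing it is the trivial one. -/
def IsPrimitive {α : Type*} (w : List α) : Prop :=
  ∀ k < w.length, w.rotate k = w → k = 0

/-- The length of the longest run of the letter c in a word. -/
noncomputable def maxRunOf {α : Type*} (c : α) (l : List α) : ℕ :=
  sSup {m | List.replicate m c <:+: l}

lemma maxRun_bdd {α : Type*} (c : α) (l : List α) :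
    BddAbove {m | List.replicate m c <:+: l} := by
  refine ⟨l.length, fun m hm => ?_⟩
  simpa using hm.length_le

lemma maxRun_mem {α : Type*} (c : α) (l : List α) :
    List.replicate (maxRunOf c l) c <:+: l :=
  Nat.sSup_mem ⟨0, by simp⟩ (maxRun_bdd c l)

lemma le_maxRun {α : Type*} {c : α} {l : List α} {m : ℕ}
    (h : List.replicate m c <:+: l) : m ≤ maxRunOf c l :=
  le_csSup (maxRun_bdd c l) h

lemma lyndon_last_ne_zero {r : List (Fin 2)} (hL : IsLyndon r) (h2 : 2 ≤ r.length)
    {x : Fin 2} (hx : r.drop (r.length - 1) = [x]) : x ≠ 0 := by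
  have hlex := hL (r.length - 1) (by omega) (by omega)
  rw [hx] at hlex
  match r, hlex with
  | a :: u, hlex =>
    cases hlex with
    | rel h' => intro h0'; rw [h0'] at h'; exact absurd h' (by simp)
    | cons h' => cases h'

theorem stmt_15 (w : List (Fin 2)) (hw : IsPrimitive w) (k : ℕ) (hk : k < w.length)
    (hL : IsLyndon (w.rotate k)) :
    maxRunOf (0 : Fin 2) w ≤ maxRunOf (0 : Fin 2) (w.rotate k) := by
  rcases Nat.eq_zero_or_pos k with rfl | hk0
  · simp
  set r := w.rotate k with hr
  set n := w.length with hn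
  have hrlen : r.length = n := by simp [hr, hn]
  have hn2 : 2 ≤ n := by omega
  set M := maxRunOf (0 : Fin 2) w with hM
  have h1 : List.replicate M (0 : Fin 2) <:+: w := maxRun_mem _ _
  have hMn : M ≤ n := by simpa using h1.length_le
  -- w is a rotation of r, hence an infix of r ++ r
  have hwr : r.rotate (n - k) = w := by
    rw [hr, List.rotate_rotate]
    have : k + (n - k) = n := by omega
    rw [this]; exact List.rotate_length w
  have hwinf : w <:+: r ++ r := by
    rw [← hwr, List.rotate_eq_drop_append_take (by omega)]
    exact ⟨r.take (n - k), r.drop (n - k), by rw [← List.append_assoc, List.take_append_drop, List.append_assoc, List.take_append_drop]⟩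
  have h2 : List.replicate M (0 : Fin 2) <:+: r ++ r := h1.trans hwinf
  -- it suffices to show replicate M 0 <:+: r
  suffices h : List.replicate M (0 : Fin 2) <:+: r from le_maxRun h
  obtain ⟨s, t, hst⟩ := h2
  set i := s.length with hi
  have hlen : i + M + t.length = 2 * n := by
    have := congrArg List.length hst
    simp at this; omega
  have hkey : List.replicate M (0 : Fin 2) = ((r ++ r).drop i).take M := by
    rw [← hst]
    simp [hi]
  by_cases hc1 : i + M ≤ n
  · -- inside first copy
    have : ((r ++ r).drop i).take M = (r.drop i).take M := by
      rw [List.drop_append_of_le_length (by omega), List.take_append_of_le_length]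
      simp; omega
    rw [hkey, this]
    exact ((r.drop i).take_prefix M).isInfix.trans (r.drop_suffix i).isInfix
  · by_cases hc2 : n ≤ i
    · have h3 : ((r ++ r).drop i).take M = (r.drop (i - n)).take M := by
        have h4 : i = r.length + (i - n) := by rw [hrlen]; omega
        have h5 := List.drop_length_add_append (l₁ := r) (l₂ := r) (i - n)
        rw [← h4] at h5
        rw [h5]
      rw [hkey, h3]
      exact ((r.drop (i - n)).take_prefix M).isInfix.trans (r.drop_suffix (i - n)).isInfix
    · -- crossing case: impossible
      exfalso
      push_neg at hc1 hc2
      have hlt : n - 1 < (r ++ r).length := by simp [hrlen]; omega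
      have hv1 : (r ++ r)[n - 1]'hlt = r[n - 1]'(by omega) :=
        List.getElem_append_left (by omega)
      have hlt2 : n - 1 < (s ++ (List.replicate M (0 : Fin 2) ++ t)).length := by
        simp only [List.length_append, List.length_replicate]; omega
      have hv2 : (s ++ (List.replicate M (0 : Fin 2) ++ t))[n - 1]'hlt2 = 0 := by
        rw [List.getElem_append_right (by omega)]
        rw [List.getElem_append_left (by simp; omega)]
        exact List.getElem_replicate _
      have heq : s ++ (List.replicate M (0 : Fin 2) ++ t) = r ++ r := by
        rw [← List.append_assoc]; exact hst
      have h7 : (r ++ r)[n - 1]'hlt = (s ++ (List.replicate M (0 : Fin 2) ++ t))[n - 1]'hlt2 :=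
        List.getElem_of_eq heq.symm hlt
      have this : r[n - 1]'(by omega) = 0 := hv1.symm.trans (h7.trans hv2)
      have hdrop : r.drop (r.length - 1) = [(0 : Fin 2)] := by
        rw [List.drop_eq_getElem_cons (by omega), List.drop_eq_nil_of_le (by omega)]
        simp only [hrlen]
        exact congrArg (fun x => [x]) this
      exact lyndon_last_ne_zero hL (by omega) hdrop rfl
end
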